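/- Let 𝔄 and 𝔅 be normed algebras, let σ : 𝔄 → 𝔅 be a continuous linear map, and let d : 𝔄 → 𝔅 be a σ-derivation. Then for each a in the separating space 𝔖(d) and all b, c ∈ 𝔄 one has a(σ(bc) − σ(b)σ(c)) = 0. -/

import Mathlib

open Filter Topology

/-- The separating space `𝔖(T)` of a linear map `T` between normed spaces: all `z`
for which there is a sequence `yₙ → 0` with `T yₙ → z`. -/
def separatingSpace {A B : Type*} [NonUnitalNormedRing A] [NonUnitalNormedRing B]
    [NormedSpace ℂ A] [NormedSpace ℂ B] (T : A →ₗ[ℂ] B) : Set B :=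
  {z | ∃ y : ℕ → A, Tendsto y atTop (𝓝 0) ∧ Tendsto (fun n => T (y n)) atTop (𝓝 z)}

/-- **Lemma 2.3.** If `𝔄`, `𝔅` are normed algebras, `σ : 𝔄 → 𝔅` is a continuous linear
map and `d : 𝔄 → 𝔅` is a `σ`-derivation, then every `a ∈ 𝔖(d)` satisfies
`a (σ(bc) − σ(b)σ(c)) = 0` for all `b c ∈ 𝔄`. -/
theorem stmt_1 {A B : Type*} [NonUnitalNormedRing A] [NonUnitalNormedRing B]
    [NormedSpace ℂ A] [NormedSpace ℂ B]
    (σ d : A →ₗ[ℂ] B) (hσ : Continuous σ)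
    (hd : ∀ x y : A, d (x * y) = d x * σ y + σ x * d y)
    (a : B) (ha : a ∈ separatingSpace d) (b c : A) :
    a * (σ (b * c) - σ b * σ c) = 0 := by
  obtain ⟨y, hy0, hyd⟩ := ha
  have hσy : Tendsto (fun n => σ (y n)) atTop (𝓝 0) := by
    have := (hσ.tendsto 0).comp hy0
    simpa [Function.comp_def] using this
  have hσyb : Tendsto (fun n => σ (y n * b)) atTop (𝓝 0) := by
    have : Tendsto (fun n => y n * b) atTop (𝓝 0) := by
      simpa using hy0.mul tendsto_const_nhds
    have := (hσ.tendsto 0).comp this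
    simpa [Function.comp_def] using this
  have h1 : Tendsto (fun n => d (y n * (b * c))) atTop (𝓝 (a * σ (b * c))) := by
    simp_rw [hd]
    have : Tendsto (fun n => d (y n) * σ (b * c) + σ (y n) * d (b * c)) atTop
        (𝓝 (a * σ (b * c) + 0 * d (b * c))) :=
      (hyd.mul tendsto_const_nhds).add (hσy.mul tendsto_const_nhds)
    simpa [hd] using this
  have h2 : Tendsto (fun n => d (y n * b * c)) atTop (𝓝 (a * σ b * σ c)) := by
    simp_rw [hd]
    have : Tendsto (fun n => (d (y n) * σ b + σ (y n) * d b) * σ c + σ (y n * b) * d c)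
        atTop (𝓝 ((a * σ b + 0 * d b) * σ c + 0 * d c)) :=
      (((hyd.mul tendsto_const_nhds).add (hσy.mul tendsto_const_nhds)).mul
        tendsto_const_nhds).add (hσyb.mul tendsto_const_nhds)
    simpa using this
  have key : a * σ (b * c) = a * σ b * σ c := by
    refine tendsto_nhds_unique ?_ h2
    simpa [mul_assoc] using h1
  rw [mul_sub, key, mul_assoc]
  simp
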